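/- Let X be an almost meshed continuum and f : X → X a continuous map. If the set Per(2^f) of periodic points of the induced map 2^f is dense in the hyperspace 2^X, then Per(f) is dense in X. -/

import Mathlib

set_option maxHeartbeats 1600000


open Set Topology Filter TopologicalSpace

/-- A dendrite: a nondegenerate continuum in which any two distinct points can be
separated by a third point. -/
def IsDendrite (X : Type*) [TopologicalSpace X] : Prop :=
  Nontrivial X ∧ ∀ x y : X, x ≠ y → ∃ z : X, z ≠ x ∧ z ≠ y ∧
    connectedComponentIn ({z}ᶜ : Set X) x ≠ connectedComponentIn ({z}ᶜ : Set X) y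

/-- `p` is an endpoint of `X` if `X \ {p}` is connected. -/
def IsEndpointOf (X : Type*) [TopologicalSpace X] (p : X) : Prop :=
  IsPreconnected ({p}ᶜ : Set X)

/-- A periodic point of `f`. -/
def IsPeriodic {X : Type*} (f : X → X) (x : X) : Prop :=
  ∃ n : ℕ, 1 ≤ n ∧ f^[n] x = x

/-- `x` has dense forward orbit under `f`. -/
def HasDenseOrbit {X : Type*} [TopologicalSpace X] (f : X → X) (x : X) : Prop :=
  Dense {y : X | ∃ n : ℕ, 1 ≤ n ∧ f^[n] x = y}

/-- Topological transitivity. -/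
def TopTransitive {X : Type*} [TopologicalSpace X] (f : X → X) : Prop :=
  ∀ U V : Set X, IsOpen U → IsOpen V → U.Nonempty → V.Nonempty →
    ∃ n : ℕ, 0 < n ∧ (f^[n] '' U ∩ V).Nonempty

/-- Total transitivity: every iterate is transitive. -/
def TotallyTransitive {X : Type*} [TopologicalSpace X] (f : X → X) : Prop :=
  ∀ n : ℕ, 1 ≤ n → TopTransitive (f^[n])

/-- Weak mixing: `f × f` is transitive. -/
def WeaklyMixing {X : Type*} [TopologicalSpace X] (f : X → X) : Prop :=
  TopTransitive (Prod.map f f)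

/-- Topological mixing. -/
def TopMixing {X : Type*} [TopologicalSpace X] (f : X → X) : Prop :=
  ∀ U V : Set X, IsOpen U → IsOpen V → U.Nonempty → V.Nonempty →
    ∃ N : ℕ, ∀ n, N ≤ n → (f^[n] '' U ∩ V).Nonempty

/-- Exactness. -/
def TopExact {X : Type*} [TopologicalSpace X] (f : X → X) : Prop :=
  ∀ U : Set X, IsOpen U → U.Nonempty → ∃ N : ℕ, 0 < N ∧ f^[N] '' U = Set.univ

/-- `A` is an arc with endpoints `a` and `b`. -/
def IsArcEnds {X : Type*} [TopologicalSpace X] (A : Set X) (a b : X) : Prop :=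
  ∃ e : (Set.Icc (0:ℝ) 1) ≃ₜ A,
    (e ⟨0, by norm_num⟩ : X) = a ∧ (e ⟨1, by norm_num⟩ : X) = b

/-- `A` is a free arc with endpoints `a` and `b`. -/
def IsFreeArc {X : Type*} [TopologicalSpace X] (A : Set X) (a b : X) : Prop :=
  IsArcEnds A a b ∧ IsOpen (A \ {a, b})

/-- A regular periodic decomposition of length `m` for `f`. -/
def IsRegPerDecomp {X : Type*} [TopologicalSpace X] (f : X → X) (m : ℕ)
    (Ds : ZMod m → Set X) : Prop :=
  0 < m ∧ (∀ i, Ds i = closure (interior (Ds i))) ∧ (⋃ i, Ds i) = Set.univ ∧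
    (∀ i, f '' Ds i = Ds (i + 1)) ∧ (∀ i j, i ≠ j → IsNowhereDense (Ds i ∩ Ds j))

/-- `f` admits a terminal (maximal-length) regular periodic decomposition. -/
def HasTerminalDecomp {X : Type*} [TopologicalSpace X] (f : X → X) : Prop :=
  ∃ (m : ℕ) (Ds : ZMod m → Set X), IsRegPerDecomp f m Ds ∧
    ∀ (m' : ℕ) (Ds' : ZMod m' → Set X), IsRegPerDecomp f m' Ds' → m' ≤ m

/-- The induced map on the hyperspace of nonempty closed (= compact) subsets. -/
def hyperMap {X : Type*} [TopologicalSpace X] {f : X → X} (hf : Continuous f) :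
    NonemptyCompacts X → NonemptyCompacts X :=
  fun A => ⟨⟨f '' A, A.isCompact.image hf⟩, A.nonempty.image f⟩

/-- The set of connected components of `X \ {p}`. -/
def componentsAt (X : Type*) [TopologicalSpace X] (p : X) : Set (Set X) :=
  {C | ∃ x : X, x ≠ p ∧ C = connectedComponentIn ({p}ᶜ : Set X) x}


/-- Fixed point from IVT. -/
private lemma stmt15_fix {h : ℝ → ℝ} {σ1 σ2 τa τb : ℝ}
    (hcont : ContinuousOn h (Set.Icc σ1 σ2))
    (ha : τa ∈ Set.Icc σ1 σ2) (hb : τb ∈ Set.Icc σ1 σ2)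
    (h1 : h τa ≤ τa) (h2 : τb ≤ h τb) : ∃ τ ∈ Set.Icc σ1 σ2, h τ = τ := by
  have hsub : Set.uIcc τa τb ⊆ Set.Icc σ1 σ2 := Set.uIcc_subset_Icc ha hb
  have hgc : ContinuousOn (fun τ => h τ - τ) (Set.uIcc τa τb) :=
    (hcont.mono hsub).sub continuousOn_id
  have h0 : (0:ℝ) ∈ Set.uIcc (h τa - τa) (h τb - τb) :=
    Set.mem_uIcc.mpr (Or.inl ⟨by linarith, by linarith⟩)
  obtain ⟨τ, hτ, hτ0⟩ := intermediate_value_uIcc hgc (by simpa using h0)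
  exact ⟨τ, hsub hτ, by simp only at hτ0; linarith⟩

/-- Exact window lemma: a continuous real function descending across an interval
has a subinterval mapping exactly onto it. -/
private lemma stmt15_window {R : ℝ → ℝ} {u v β1 β2 : ℝ} (huv : u ≤ v)
    (hcont : ContinuousOn R (Set.Icc u v)) (hβ : β1 ≤ β2)
    (hu : β2 < R u) (hv : R v < β1) :
    ∃ σ1 σ2, u ≤ σ1 ∧ σ1 ≤ σ2 ∧ σ2 ≤ v ∧ R '' Set.Icc σ1 σ2 = Set.Icc β1 β2 := by
  set S : Set ℝ := Set.Icc u v ∩ R ⁻¹' {β1} with hSdef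
  have hSclosed : IsClosed S :=
    hcont.preimage_isClosed_of_isClosed isClosed_Icc isClosed_singleton
  have hSne : S.Nonempty := by
    have hmem : β1 ∈ Set.Icc (R v) (R u) := ⟨hv.le, by linarith⟩
    obtain ⟨τ, hτ, hτ'⟩ := intermediate_value_Icc' huv hcont hmem
    exact ⟨τ, hτ, hτ'⟩
  have hSbdd : BddBelow S := ⟨u, fun τ hτ => hτ.1.1⟩
  set σ2 := sInf S with hσ2def
  have hσ2S : σ2 ∈ S := hSclosed.csInf_mem hSne hSbdd
  have hσ2mem : σ2 ∈ Set.Icc u v := hσ2S.1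
  have hσ2val : R σ2 = β1 := hσ2S.2
  have hge : ∀ τ ∈ Set.Icc u σ2, β1 ≤ R τ := by
    intro τ hτ
    by_contra hlt
    push_neg at hlt
    have hτv : τ ∈ Set.Icc u v := ⟨hτ.1, le_trans hτ.2 hσ2mem.2⟩
    have hτlt : τ < σ2 := by
      rcases lt_or_eq_of_le hτ.2 with h | h
      · exact h
      · exfalso; rw [h, hσ2val] at hlt; linarith
    have hsub : Set.Icc u τ ⊆ Set.Icc u v := Set.Icc_subset_Icc le_rfl hτv.2
    have hmem : β1 ∈ Set.Icc (R τ) (R u) := ⟨hlt.le, by linarith⟩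
    obtain ⟨τ', hτ', hτ'v⟩ := intermediate_value_Icc' hτ.1 (hcont.mono hsub) hmem
    have h1 : σ2 ≤ τ' := csInf_le hSbdd ⟨⟨hτ'.1, le_trans hτ'.2 hτv.2⟩, hτ'v⟩
    have h2 : τ' ≤ τ := hτ'.2
    linarith
  set T : Set ℝ := Set.Icc u σ2 ∩ R ⁻¹' {β2} with hTdef
  have hsubT : Set.Icc u σ2 ⊆ Set.Icc u v := Set.Icc_subset_Icc le_rfl hσ2mem.2
  have hTclosed : IsClosed T :=
    (hcont.mono hsubT).preimage_isClosed_of_isClosed isClosed_Icc isClosed_singleton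
  have hTne : T.Nonempty := by
    have hmem : β2 ∈ Set.Icc (R σ2) (R u) := ⟨by rw [hσ2val]; exact hβ, hu.le⟩
    obtain ⟨τ, hτ, hτ'⟩ := intermediate_value_Icc' hσ2mem.1 (hcont.mono hsubT) hmem
    exact ⟨τ, hτ, hτ'⟩
  have hTbdd : BddAbove T := ⟨σ2, fun τ hτ => hτ.1.2⟩
  set σ1 := sSup T with hσ1def
  have hσ1T : σ1 ∈ T := hTclosed.csSup_mem hTne hTbdd
  have hσ1mem : σ1 ∈ Set.Icc u σ2 := hσ1T.1
  have hσ1val : R σ1 = β2 := hσ1T.2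
  have hle : ∀ τ ∈ Set.Icc σ1 σ2, R τ ≤ β2 := by
    intro τ hτ
    by_contra hgt
    push_neg at hgt
    have hτgt : σ1 < τ := by
      rcases lt_or_eq_of_le hτ.1 with h | h
      · exact h
      · exfalso; rw [← h, hσ1val] at hgt; linarith
    have hsub2 : Set.Icc τ σ2 ⊆ Set.Icc u v :=
      Set.Icc_subset_Icc (le_trans hσ1mem.1 hτ.1) hσ2mem.2
    have hmem : β2 ∈ Set.Icc (R σ2) (R τ) := ⟨by rw [hσ2val]; exact hβ, hgt.le⟩
    obtain ⟨τ', hτ', hτ'v⟩ := intermediate_value_Icc' hτ.2 (hcont.mono hsub2) hmem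
    have h1 : τ' ≤ σ1 := le_csSup hTbdd
      ⟨⟨le_trans hσ1mem.1 (le_trans hτ.1 hτ'.1), hτ'.2⟩, hτ'v⟩
    have h2 : τ ≤ τ' := hτ'.1
    linarith
  have hsub12 : Set.Icc σ1 σ2 ⊆ Set.Icc u v :=
    Set.Icc_subset_Icc hσ1mem.1 hσ2mem.2
  refine ⟨σ1, σ2, hσ1mem.1, hσ1mem.2, hσ2mem.2, ?_⟩
  apply Set.Subset.antisymm
  · rintro y ⟨τ, hτ, rfl⟩
    exact ⟨hge τ ⟨le_trans hσ1mem.1 hτ.1, hτ.2⟩, hle τ hτ⟩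
  · intro y hy
    have hmem : y ∈ Set.Icc (R σ2) (R σ1) := by rw [hσ2val, hσ1val]; exact hy
    obtain ⟨τ, hτ, hτ'⟩ := intermediate_value_Icc' hσ1mem.2 (hcont.mono hsub12) hmem
    exact ⟨τ, hτ, hτ'⟩

/-- Components of closed sets are closed. -/
private lemma stmt15_cci_closed {X : Type*} [TopologicalSpace X] {F : Set X} (hF : IsClosed F)
    (x : X) : IsClosed (connectedComponentIn F x) := by
  by_cases hx : x ∈ F
  · have h1 : closure (connectedComponentIn F x) ⊆ connectedComponentIn F x :=
      IsPreconnected.subset_connectedComponentIn isPreconnected_connectedComponentIn.closure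
        (subset_closure (mem_connectedComponentIn hx))
        (closure_minimal (connectedComponentIn_subset F x) hF)
    exact isClosed_of_closure_subset h1
  · rw [connectedComponentIn_eq_empty hx]; exact isClosed_empty

/-- Boundary bumping: in a continuum, if the boundary of the open set `O` is contained
in `{a, b}`, then every point of the complement of `O` lies in the component of `a`
or the component of `b`. -/
private lemma stmt15_bump {X : Type*} [TopologicalSpace X] [CompactSpace X] [T2Space X]
    [PreconnectedSpace X] {O : Set X} {a b : X} (hO : IsOpen O) (hne : O.Nonempty)
    (hfr : closure O \ O ⊆ {a, b}) (ha : a ∉ O) (hb : b ∉ O) :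
    ∀ x ∈ Oᶜ, x ∈ connectedComponentIn Oᶜ a ∪ connectedComponentIn Oᶜ b := by
  intro x hx
  by_cases haK : a ∈ connectedComponentIn Oᶜ x
  · left
    rw [← connectedComponentIn_eq haK]
    exact mem_connectedComponentIn hx
  by_cases hbK : b ∈ connectedComponentIn Oᶜ x
  · right
    rw [← connectedComponentIn_eq hbK]
    exact mem_connectedComponentIn hx
  exfalso
  haveI : CompactSpace ↥(Oᶜ) := isCompact_iff_compactSpace.mp hO.isClosed_compl.isCompact
  set x' : ↥(Oᶜ) := ⟨x, hx⟩ with hx'def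
  have hKim : connectedComponentIn Oᶜ x = (↑) '' connectedComponent x' :=
    connectedComponentIn_eq_image hx
  have ha' : (⟨a, ha⟩ : ↥(Oᶜ)) ∉ connectedComponent x' := by
    intro h
    exact haK (hKim ▸ ⟨_, h, rfl⟩)
  have hb' : (⟨b, hb⟩ : ↥(Oᶜ)) ∉ connectedComponent x' := by
    intro h
    exact hbK (hKim ▸ ⟨_, h, rfl⟩)
  rw [connectedComponent_eq_iInter_isClopen, Set.mem_iInter] at ha' hb'
  push_neg at ha' hb'
  obtain ⟨⟨Za, hZa, hxZa⟩, haZ⟩ := ha'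
  obtain ⟨⟨Zb, hZb, hxZb⟩, hbZ⟩ := hb'
  set Z := Za ∩ Zb with hZdef
  have hZcl : IsClopen Z := hZa.inter hZb
  set Z' : Set X := (↑) '' Z with hZ'def
  have hZ'sub : Z' ⊆ Oᶜ := by rintro _ ⟨z, hz, rfl⟩; exact z.2
  have haZ' : a ∉ Z' := by
    rintro ⟨z, hz, hze⟩
    apply haZ
    have hz' : z = ⟨a, ha⟩ := Subtype.ext hze
    exact hz' ▸ hz.1
  have hbZ' : b ∉ Z' := by
    rintro ⟨z, hz, hze⟩
    apply hbZ
    have hz' : z = ⟨b, hb⟩ := Subtype.ext hze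
    exact hz' ▸ hz.2
  have hint : Z' ⊆ interior Oᶜ := by
    intro z hz
    have hzO : z ∈ Oᶜ := hZ'sub hz
    have hzcl : z ∉ closure O := by
      intro hcl
      have h2 := hfr ⟨hcl, hzO⟩
      rcases h2 with h2 | h2
      · exact haZ' (h2 ▸ hz)
      · exact hbZ' (h2 ▸ hz)
    exact interior_maximal (compl_subset_compl.mpr subset_closure)
      isClosed_closure.isOpen_compl hzcl
  have hZ'closed : IsClosed Z' :=
    (hZcl.isClosed.isCompact.image continuous_subtype_val).isClosed
  have hZ'open : IsOpen Z' := by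
    obtain ⟨V, hVopen, hVeq⟩ := isOpen_induced_iff.mp hZcl.isOpen
    have hZ'eq : Z' = V ∩ Oᶜ := by
      rw [hZ'def, ← hVeq, Subtype.image_preimage_coe, Set.inter_comm]
    have h2 : Z' = V ∩ interior Oᶜ := by
      apply Set.Subset.antisymm
      · intro z hz
        exact ⟨(hZ'eq ▸ hz).1, hint hz⟩
      · intro z hz
        rw [hZ'eq]
        exact ⟨hz.1, interior_subset hz.2⟩
    rw [h2]
    exact hVopen.inter isOpen_interior
  have hZ'ne : Z'.Nonempty := ⟨x, ⟨x', ⟨hxZa, hxZb⟩, rfl⟩⟩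
  have hZ'univ : Z' ≠ Set.univ := by
    intro h
    obtain ⟨o, ho⟩ := hne
    exact (hZ'sub (h ▸ Set.mem_univ o)) ho
  rcases isClopen_iff.mp ⟨hZ'closed, hZ'open⟩ with h | h
  · exact hZ'ne.ne_empty h
  · exact hZ'univ h


private lemma stmt15_hyperIter {X : Type*} [TopologicalSpace X] {f : X → X} (hf : Continuous f)
    (n : ℕ) (A : NonemptyCompacts X) :
    (((hyperMap hf)^[n] A : NonemptyCompacts X) : Set X) = f^[n] '' (A : Set X) := by
  induction n with
  | zero => simp
  | succ n ih =>
    rw [Function.iterate_succ_apply', Function.iterate_succ']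
    have h1 : ((hyperMap hf ((hyperMap hf)^[n] A) : NonemptyCompacts X) : Set X)
        = f '' (((hyperMap hf)^[n] A : NonemptyCompacts X) : Set X) := rfl
    rw [h1, ih, Set.image_comp]

/-- On an almost meshed continuum, density of the periodic points of the
induced hyperspace map implies density of the periodic points of `f`. -/
theorem stmt15 {X : Type*} [MetricSpace X] [CompactSpace X] [ConnectedSpace X]
    (hmesh : Dense {x : X | ∃ (A : Set X) (a b : X), IsFreeArc A a b ∧ x ∈ interior A})
    {f : X → X} (hf : Continuous f)
    (hper : Dense {A : NonemptyCompacts X | IsPeriodic (hyperMap hf) A}) :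
    Dense {p : X | IsPeriodic f p} := by
  classical
  by_contra hden
  rw [dense_iff_inter_open] at hden
  push_neg at hden
  obtain ⟨U, hUopen, hUne, hUdisj'⟩ := hden
  have hUdisj : U ∩ {p | IsPeriodic f p} = ∅ := hUdisj'
  obtain ⟨y, hymesh, hyU⟩ := hmesh.exists_mem_open hUopen hUne
  obtain ⟨A', a', b', hfree, hyint⟩ := hymesh
  obtain ⟨⟨e, he0, he1⟩, hfrOpen⟩ := hfree
  -- basic structure of the arc
  haveI : CompactSpace ↥(Set.Icc (0:ℝ) 1) := isCompact_iff_compactSpace.mp isCompact_Icc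
  haveI : CompactSpace ↥A' := e.compactSpace
  have hA'cpt : IsCompact A' := isCompact_iff_compactSpace.mpr inferInstance
  have hA'closed : IsClosed A' := hA'cpt.isClosed
  -- the coordinate function, extended to all of X by Tietze
  obtain ⟨Φc, hΦc⟩ := ContinuousMap.exists_restrict_eq (X := X) hA'closed
      ⟨fun y => ((e.symm y : Set.Icc (0:ℝ) 1) : ℝ), by continuity⟩
  set Φ : X → ℝ := ⇑Φc with hΦdef
  have hΦcont : Continuous Φ := Φc.continuous
  have hΦA : ∀ (y : X) (hy : y ∈ A'), Φ y = ((e.symm ⟨y, hy⟩ : Set.Icc (0:ℝ) 1) : ℝ) := by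
    intro y hy
    have h1 := ContinuousMap.congr_fun hΦc ⟨y, hy⟩
    simpa using h1
  -- the parametrization of the arc as a map on ℝ
  set et : ℝ → X := fun τ => ((e (Set.projIcc (0:ℝ) 1 zero_le_one τ) : ↥A') : X) with hetdef
  have hetcont : Continuous et :=
    continuous_subtype_val.comp (e.continuous.comp continuous_projIcc)
  have hetA : ∀ τ, et τ ∈ A' := fun τ => (e (Set.projIcc (0:ℝ) 1 zero_le_one τ)).2
  have hΦet : ∀ τ ∈ Set.Icc (0:ℝ) 1, Φ (et τ) = τ := by
    intro τ hτ
    rw [hΦA _ (hetA τ)]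
    have h1 : (⟨et τ, hetA τ⟩ : ↥A') = e (Set.projIcc (0:ℝ) 1 zero_le_one τ) := rfl
    rw [h1, Homeomorph.symm_apply_apply, Set.projIcc_of_mem _ hτ]
  have hetΦ : ∀ (y : X), y ∈ A' → et (Φ y) = y := by
    intro y hy
    rw [hΦA y hy]
    show ((e (Set.projIcc (0:ℝ) 1 zero_le_one _) : ↥A') : X) = y
    rw [Set.projIcc_val, Homeomorph.apply_symm_apply]
  have hΦIcc : ∀ (y : X), y ∈ A' → Φ y ∈ Set.Icc (0:ℝ) 1 := by
    intro y hy
    rw [hΦA y hy]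
    exact (e.symm ⟨y, hy⟩).2
  have het0 : et 0 = a' := by
    show ((e (Set.projIcc (0:ℝ) 1 zero_le_one 0) : ↥A') : X) = a'
    rw [Set.projIcc_of_mem _ (Set.left_mem_Icc.mpr zero_le_one)]
    exact he0
  have het1 : et 1 = b' := by
    show ((e (Set.projIcc (0:ℝ) 1 zero_le_one 1) : ↥A') : X) = b'
    rw [Set.projIcc_of_mem _ (Set.right_mem_Icc.mpr zero_le_one)]
    exact he1
  have hΦa' : Φ a' = 0 := by rw [← het0]; exact hΦet 0 ⟨le_rfl, zero_le_one⟩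
  have hΦb' : Φ b' = 1 := by rw [← het1]; exact hΦet 1 ⟨zero_le_one, le_rfl⟩
  -- the open part of the free arc
  set O : Set X := A' \ {a', b'} with hOdef
  have hOopen : IsOpen O := hfrOpen
  have hOsubA : O ⊆ A' := Set.diff_subset
  have hOΦ : ∀ z ∈ O, Φ z ∈ Set.Ioo (0:ℝ) 1 := by
    intro z hz
    have hzA := hOsubA hz
    have h01 := hΦIcc z hzA
    have hza : z ≠ a' := fun h => hz.2 (by rw [h]; exact Set.mem_insert _ _)
    have hzb : z ≠ b' := fun h => hz.2 (by rw [h]; right; rfl)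
    constructor
    · rcases lt_or_eq_of_le h01.1 with h | h
      · exact h
      · exfalso; apply hza; rw [← hetΦ z hzA, ← h, het0]
    · rcases lt_or_eq_of_le h01.2 with h | h
      · exact h
      · exfalso; apply hzb; rw [← hetΦ z hzA, h, het1]
  have hetO : ∀ τ ∈ Set.Ioo (0:ℝ) 1, et τ ∈ O := by
    intro τ hτ
    refine ⟨hetA τ, ?_⟩
    intro hmem
    rcases hmem with h | h
    · have := hΦet τ ⟨hτ.1.le, hτ.2.le⟩
      rw [h, hΦa'] at this
      exact absurd this.symm (ne_of_gt hτ.1)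
    · have := hΦet τ ⟨hτ.1.le, hτ.2.le⟩
      rw [Set.mem_singleton_iff.mp h, hΦb'] at this
      exact absurd this.symm (ne_of_lt hτ.2)
  -- selection of the interval [s, t] with the arc inside U
  have hyA' : y ∈ A' := interior_subset hyint
  set τy := Φ y with hτydef
  have hτyIcc : τy ∈ Set.Icc (0:ℝ) 1 := hΦIcc y hyA'
  obtain ⟨δ, hδ0, hδball⟩ := Metric.isOpen_iff.mp (hUopen.preimage hetcont) τy
    (by rw [Set.mem_preimage, hτydef, hetΦ y hyA']; exact hyU)
  set L := max 0 (τy - δ/2) with hLdef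
  set Hi := min 1 (τy + δ/2) with hHidef
  have hLHi : L < Hi := by
    rw [hLdef, hHidef]
    rcases hτyIcc with ⟨h1, h2⟩
    simp only [lt_min_iff, max_lt_iff]
    exact ⟨⟨zero_lt_one, by linarith⟩, ⟨by linarith, by linarith⟩⟩
  obtain ⟨s, hLs, hsHi⟩ := exists_between hLHi
  obtain ⟨t, hst, htHi⟩ := exists_between hsHi
  have hs0 : 0 < s := lt_of_le_of_lt (le_max_left _ _) hLs
  have ht1 : t < 1 := lt_of_lt_of_le htHi (min_le_left _ _)
  have hstU : ∀ τ ∈ Set.Icc s t, et τ ∈ U := by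
    intro τ hτ
    apply hδball
    rw [Metric.mem_ball, Real.dist_eq, abs_sub_lt_iff]
    have hL2 : τy - δ/2 ≤ L := le_max_right _ _
    have hH2 : Hi ≤ τy + δ/2 := min_le_right _ _
    constructor
    · have : τ ≤ t := hτ.2
      have : t < Hi := htHi
      linarith
    · have : s ≤ τ := hτ.1
      linarith
  -- no periodic points on the subarc
  have hnoper : ∀ τ ∈ Set.Icc s t, ∀ n : ℕ, 0 < n → f^[n] (et τ) ≠ et τ := by
    intro τ hτ n hn heq
    have hmem : et τ ∈ U ∩ {p | IsPeriodic f p} := ⟨hstU τ hτ, ⟨n, hn, heq⟩⟩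
    rw [hUdisj] at hmem
    exact hmem
  -- extraction of invariant sets from density of periodic points of the induced map
  have getB : ∀ u v : ℝ, s ≤ u → u < v → v ≤ t → ∃ (B : Set X) (n : ℕ),
      0 < n ∧ B.Nonempty ∧ IsCompact B ∧ f^[n] '' B = B ∧ B ⊆ O ∧
      ∀ z ∈ B, Φ z ∈ Set.Ioo u v := by
    intro u v hsu huv hvt
    set m := (u + v)/2 with hmdef
    have hm : m ∈ Set.Ioo u v := ⟨by rw [hmdef]; linarith, by rw [hmdef]; linarith⟩
    have hm01 : m ∈ Set.Ioo (0:ℝ) 1 := ⟨by linarith [hm.1], by linarith [hm.2]⟩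
    set SET := O ∩ Φ ⁻¹' (Set.Ioo u v) with hSETdef
    have hSETopen : IsOpen SET := hOopen.inter (isOpen_Ioo.preimage hΦcont)
    have hxm : et m ∈ SET := by
      refine ⟨hetO m hm01, ?_⟩
      rw [Set.mem_preimage, hΦet m ⟨hm01.1.le, hm01.2.le⟩]
      exact hm
    obtain ⟨r, hr0, hrsub⟩ := Metric.isOpen_iff.mp hSETopen (et m) hxm
    set K0 : NonemptyCompacts X := ⟨⟨{et m}, isCompact_singleton⟩, Set.singleton_nonempty _⟩
      with hK0def
    obtain ⟨Bc, hBcS, hBcd⟩ := Metric.mem_closure_iff.mp (hper K0) r hr0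
    obtain ⟨n, hn1, hBit⟩ := hBcS
    have hsets : f^[n] '' (Bc : Set X) = (Bc : Set X) := by
      have h2 := congrArg (fun A : NonemptyCompacts X => (A : Set X)) hBit
      rwa [stmt15_hyperIter hf n Bc] at h2
    have hdH : Metric.hausdorffDist ({et m} : Set X) (Bc : Set X) < r := hBcd
    have hfin : EMetric.hausdorffEdist ({et m} : Set X) (Bc : Set X) ≠ ⊤ :=
      Metric.hausdorffEdist_ne_top_of_nonempty_of_bounded (Set.singleton_nonempty _)
        Bc.nonempty Bornology.isBounded_singleton Bc.isCompact.isBounded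
    have hsub : (Bc : Set X) ⊆ SET := by
      intro z hz
      obtain ⟨y', hy', hyd⟩ := Metric.exists_dist_lt_of_hausdorffDist_lt' hz hdH hfin
      rw [Set.mem_singleton_iff.mp hy'] at hyd
      apply hrsub
      rw [Metric.mem_ball, dist_comm]
      exact hyd
    exact ⟨(Bc : Set X), n, hn1, Bc.nonempty, Bc.isCompact, hsets,
      fun z hz => (hsub hz).1, fun z hz => (hsub hz).2⟩
  -- four invariant sets in four zones
  set w := t - s with hwdef
  have hw : 0 < w := by rw [hwdef]; linarith
  obtain ⟨B1, n1, hn1, hB1ne, hB1cpt, hB1per, hB1O, hB1z⟩ :=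
    getB (s + w/9) (s + 2*w/9) (by linarith) (by linarith) (by rw [hwdef]; linarith)
  obtain ⟨B2, n2, hn2, hB2ne, hB2cpt, hB2per, hB2O, hB2z⟩ :=
    getB (s + 3*w/9) (s + 4*w/9) (by linarith) (by linarith) (by rw [hwdef]; linarith)
  obtain ⟨B3, n3, hn3, hB3ne, hB3cpt, hB3per, hB3O, hB3z⟩ :=
    getB (s + 5*w/9) (s + 6*w/9) (by linarith) (by linarith) (by rw [hwdef]; linarith)
  obtain ⟨B4, n4, hn4, hB4ne, hB4cpt, hB4per, hB4O, hB4z⟩ :=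
    getB (s + 7*w/9) (s + 8*w/9) (by linarith) (by linarith) (by rw [hwdef]; linarith)
  -- one common iterate fixing all four sets
  have iterBig : ∀ (B : Set X) (n : ℕ), f^[n] '' B = B → ∀ k, f^[n*k] '' B = B := by
    intro B n hB k
    induction k with
    | zero => simp
    | succ k ih =>
      rw [Nat.mul_succ, Function.iterate_add, Set.image_comp, hB, ih]
  set N := n1 * n2 * n3 * n4 with hNdef
  have hNpos : 0 < N := by positivity
  set F := f^[N] with hFdef
  have hFcont : Continuous F := hf.iterate N
  have hFB1 : F '' B1 = B1 := by
    rw [hFdef, show N = n1 * (n2 * n3 * n4) by rw [hNdef]; ring]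
    exact iterBig B1 n1 hB1per _
  have hFB2 : F '' B2 = B2 := by
    rw [hFdef, show N = n2 * (n1 * n3 * n4) by rw [hNdef]; ring]
    exact iterBig B2 n2 hB2per _
  have hFB3 : F '' B3 = B3 := by
    rw [hFdef, show N = n3 * (n1 * n2 * n4) by rw [hNdef]; ring]
    exact iterBig B3 n3 hB3per _
  have hFB4 : F '' B4 = B4 := by
    rw [hFdef, show N = n4 * (n1 * n2 * n3) by rw [hNdef]; ring]
    exact iterBig B4 n4 hB4per _
  -- the complement of the open arc and its components
  have haO : a' ∉ O := fun h => h.2 (Set.mem_insert _ _)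
  have hbO : b' ∉ O := fun h => h.2 (by right; rfl)
  have hfrO : closure O \ O ⊆ {a', b'} := by
    intro z hz
    have hzA : z ∈ A' := closure_minimal Set.diff_subset hA'closed hz.1
    by_contra hzab
    exact hz.2 ⟨hzA, hzab⟩
  have hOne : O.Nonempty := ⟨et (1/2), hetO (1/2) ⟨by norm_num, by norm_num⟩⟩
  have hbump : ∀ x ∈ Oᶜ, x ∈ connectedComponentIn Oᶜ a' ∪ connectedComponentIn Oᶜ b' :=
    stmt15_bump hOopen hOne hfrO haO hbO
  have haOc : a' ∈ (Oᶜ : Set X) := haO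
  have hbOc : b' ∈ (Oᶜ : Set X) := hbO
  have hclopre : closure O ⊆ A' := closure_minimal Set.diff_subset hA'closed
  by_cases hcase : b' ∈ connectedComponentIn Oᶜ a'
  · -- Case II : the complement of the open arc is connected (circle-like case)
    haveI : Fact ((0:ℝ) < 1) := ⟨zero_lt_one⟩
    set C := connectedComponentIn Oᶜ a' with hCdef
    have hCclosed : IsClosed C := stmt15_cci_closed hOopen.isClosed_compl a'
    have hCsub : C ⊆ Oᶜ := connectedComponentIn_subset _ _
    have hEC : (Oᶜ : Set X) = C := by
      apply Set.Subset.antisymm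
      · intro z hz
        rcases hbump z hz with h | h
        · exact h
        · rw [hCdef, connectedComponentIn_eq hcase]
          exact h
      · exact hCsub
    have haC : a' ∈ C := mem_connectedComponentIn haOc
    have hbC : b' ∈ C := hcase
    have hCc : (Cᶜ : Set X) = O := by rw [← hEC, compl_compl]
    have hfrC : ∀ z ∈ frontier C, z = a' ∨ z = b' := by
      intro z hz
      rw [frontier_eq_closure_inter_closure] at hz
      have hzC : z ∈ C := hCclosed.closure_eq ▸ hz.1
      have hz2 : z ∈ closure O := hCc ▸ hz.2
      have hzO : z ∉ O := fun hO => (hCsub hzC) hO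
      rcases hfrO ⟨hz2, hzO⟩ with h | h
      · exact Or.inl h
      · exact Or.inr h
    set π₂ : X → AddCircle (1:ℝ) :=
      C.piecewise (fun _ => (0 : AddCircle (1:ℝ))) (fun z => ((Φ z : ℝ) : AddCircle (1:ℝ)))
      with hπ₂def
    have hcoecont : Continuous (fun τ : ℝ => ((τ : ℝ) : AddCircle (1:ℝ))) :=
      AddCircle.continuous_mk' 1
    have hπ₂cont : Continuous π₂ := by
      rw [hπ₂def]
      apply Continuous.piecewise _ continuous_const (hcoecont.comp hΦcont)
      intro z hz
      rcases hfrC z hz with h | h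
      · rw [h]
        show (0 : AddCircle (1:ℝ)) = ((Φ a' : ℝ) : AddCircle (1:ℝ))
        rw [hΦa']
        norm_num
      · rw [h]
        show (0 : AddCircle (1:ℝ)) = ((Φ b' : ℝ) : AddCircle (1:ℝ))
        rw [hΦb']
        exact (AddCircle.coe_period (p := (1:ℝ))).symm
    have hπ₂O : ∀ z ∈ O, π₂ z = ((Φ z : ℝ) : AddCircle (1:ℝ)) := by
      intro z hz
      have h1 : z ∉ C := fun h => (hCsub h) hz
      rw [hπ₂def, Set.piecewise_eq_of_notMem _ _ _ h1]
    have hfib : ∀ (z : X) (τ : ℝ), τ ∈ Set.Ioo (0:ℝ) 1 →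
        π₂ z = ((τ : ℝ) : AddCircle (1:ℝ)) → z = et τ := by
      intro z τ hτ hπz
      by_cases hzC : z ∈ C
      · rw [hπ₂def, Set.piecewise_eq_of_mem _ _ _ hzC] at hπz
        exfalso
        have h1 : ((τ : ℝ) : AddCircle (1:ℝ)) = 0 := hπz.symm
        rw [AddCircle.coe_eq_zero_iff_of_mem_Ico ⟨hτ.1.le, hτ.2⟩] at h1
        exact (ne_of_gt hτ.1) h1
      have hzO : z ∈ O := by
        by_contra hzO'
        exact hzC (hEC ▸ hzO')
      rw [hπ₂O z hzO] at hπz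
      have hΦz : Φ z = τ := by
        have h1 : Φ z ∈ Set.Ico (0:ℝ) (0 + 1) := by
          rw [zero_add]
          have := hOΦ z hzO
          exact ⟨this.1.le, this.2⟩
        have h2 : τ ∈ Set.Ico (0:ℝ) (0 + 1) := by
          rw [zero_add]
          exact ⟨hτ.1.le, hτ.2⟩
        exact (AddCircle.coe_eq_coe_iff_of_mem_Ico h1 h2).mp hπz
      rw [← hΦz]
      exact (hetΦ z (hOsubA hzO)).symm
    -- the key covering lemma for a pair of invariant sets
    have PAIR : ∀ (B B' : Set X) (u1 v1 u2 v2 β1 β2 δ' : ℝ),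
        B.Nonempty → IsCompact B → F '' B = B → B ⊆ O → (∀ z ∈ B, Φ z ∈ Set.Ioo u1 v1) →
        B'.Nonempty → IsCompact B' → F '' B' = B' → B' ⊆ O →
        (∀ z ∈ B', Φ z ∈ Set.Ioo u2 v2) →
        s ≤ u1 → v1 ≤ u2 → v2 ≤ t →
        0 < β1 → β1 ≤ β2 → β2 < 1 →
        ((δ' = 0 ∧ v2 < β1) ∨ (δ' = 1 ∧ β2 < u1)) →
        ∃ (σ1 σ2 : ℝ) (RR : ℝ → ℝ), sSup (Φ '' B) ≤ σ1 ∧ σ1 ≤ σ2 ∧ σ2 ≤ sInf (Φ '' B') ∧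
          ContinuousOn RR (Set.Icc σ1 σ2) ∧ RR '' Set.Icc σ1 σ2 = Set.Icc β1 β2 ∧
          ∀ τ ∈ Set.Icc σ1 σ2, F (et τ) = et (RR τ) := by
      intro B B' u1 v1 u2 v2 β1 β2 δ' hBne hBcpt hBF hBO hBz hB'ne hB'cpt hB'F hB'O hB'z
        hsu1 hv1u2 hv2t hβ1 hβ12 hβ2 hδ'
      have hu1pos : 0 < u1 := lt_of_lt_of_le hs0 hsu1
      have hv2lt1 : v2 < 1 := lt_of_le_of_lt hv2t ht1
      set μ := sSup (Φ '' B) with hμdef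
      have hμmem : μ ∈ Φ '' B := (hBcpt.image hΦcont).sSup_mem (hBne.image Φ)
      obtain ⟨q, hqB, hq⟩ := hμmem
      have hμIoo : μ ∈ Set.Ioo u1 v1 := by rw [← hq]; exact hBz q hqB
      set ν := sInf (Φ '' B') with hνdef
      have hνmem : ν ∈ Φ '' B' := (hB'cpt.image hΦcont).sInf_mem (hB'ne.image Φ)
      obtain ⟨p', hpB', hp⟩ := hνmem
      have hνIoo : ν ∈ Set.Ioo u2 v2 := by rw [← hp]; exact hB'z p' hpB'
      have hμν : μ < ν := by
        have h1 := hμIoo.2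
        have h2 := hνIoo.1
        linarith
      have hIccst : Set.Icc μ ν ⊆ Set.Icc s t :=
        Set.Icc_subset_Icc (by linarith [hμIoo.1]) (by linarith [hνIoo.2])
      have hIcc01 : ∀ τ ∈ Set.Icc μ ν, τ ∈ Set.Ioo (0:ℝ) 1 := by
        intro τ hτ
        constructor
        · have := hμIoo.1
          linarith [hτ.1]
        · have := hνIoo.2
          linarith [hτ.2]
      set Pm : ℝ → AddCircle (1:ℝ) := fun τ => π₂ (F (et τ)) - (τ : AddCircle (1:ℝ))
        with hPmdef
      have hPmcont : Continuous Pm :=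
        (hπ₂cont.comp (hFcont.comp hetcont)).sub hcoecont
      have hPne : ∀ τ ∈ Set.Icc μ ν, Pm τ ≠ 0 := by
        intro τ hτ h0
        rw [hPmdef] at h0
        simp only [sub_eq_zero] at h0
        have h2 := hfib (F (et τ)) τ (hIcc01 τ hτ) h0
        exact hnoper τ (hIccst hτ) N hNpos h2
      set c : ℝ → ℝ := fun τ => ((AddCircle.equivIoc (1:ℝ) 0 (Pm τ)) : ℝ) with hcdef
      have hcoe0 : ((0:ℝ) : AddCircle (1:ℝ)) = 0 := by simp
      have hccont : ContinuousOn c (Set.Icc μ ν) := by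
        intro τ hτ
        have hne : Pm τ ≠ ((0:ℝ) : AddCircle (1:ℝ)) := by
          rw [hcoe0]; exact hPne τ hτ
        exact (continuousAt_subtype_val.comp
          ((AddCircle.continuousAt_equivIoc (1:ℝ) 0 hne).comp
            hPmcont.continuousAt)).continuousWithinAt
      have hceq : ∀ τ, ((c τ : ℝ) : AddCircle (1:ℝ)) = Pm τ := by
        intro τ
        exact (AddCircle.equivIoc (1:ℝ) 0).symm_apply_apply (Pm τ)
      have hrep : ∀ (τ d : ℝ), d ∈ Set.Ioc (0:ℝ) 1 → Pm τ = ((d:ℝ) : AddCircle (1:ℝ)) →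
          c τ = d := by
        intro τ d hd hPd
        have hd' : d ∈ Set.Ioc (0:ℝ) (0+1) := by rwa [zero_add]
        have h1 : AddCircle.equivIoc (1:ℝ) 0 ((d:ℝ) : AddCircle (1:ℝ)) = ⟨d, hd'⟩ := by
          rw [Equiv.apply_eq_iff_eq_symm_apply]
          rfl
        rw [hcdef]
        simp only
        rw [hPd, h1]
      set R : ℝ → ℝ := fun τ => τ + c τ with hRdef
      have hRcont : ContinuousOn R (Set.Icc μ ν) := by
        rw [hRdef]
        exact continuousOn_id.add hccont
      have hπR : ∀ τ, π₂ (F (et τ)) = ((R τ : ℝ) : AddCircle (1:ℝ)) := by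
        intro τ
        rw [hRdef]
        simp only
        rw [AddCircle.coe_add, hceq τ, hPmdef]
        simp only
        abel
      have hetμ : et μ = q := by rw [← hq]; exact hetΦ q (hOsubA (hBO hqB))
      set ξ := Φ (F q) with hξdef
      have hFqB : F q ∈ B := hBF ▸ Set.mem_image_of_mem F hqB
      have hξIoo : ξ ∈ Set.Ioo u1 v1 := hBz _ hFqB
      have hξμ : ξ ≤ μ := le_csSup (hBcpt.image hΦcont).bddAbove (Set.mem_image_of_mem Φ hFqB)
      have hPμ : Pm μ = ((ξ - μ + 1 : ℝ) : AddCircle (1:ℝ)) := by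
        rw [hPmdef]
        simp only
        rw [hetμ, hπ₂O (F q) (hBO hFqB), ← hξdef]
        rw [sub_eq_iff_eq_add, ← AddCircle.coe_add,
          show ξ - μ + 1 + μ = ξ + 1 by ring, AddCircle.coe_add_period]
      have hcμ : c μ = ξ - μ + 1 := by
        apply hrep μ _ _ hPμ
        constructor
        · have h1 := hμIoo.2
          have h2 := hνIoo.1
          have h3 := hξIoo.1
          have h4 := hνIoo.2
          linarith
        · linarith
      have hRμ : R μ = ξ + 1 := by
        rw [hRdef]
        simp only
        rw [hcμ]
        ring
      have hetν : et ν = p' := by rw [← hp]; exact hetΦ p' (hOsubA (hB'O hpB'))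
      set ζ := Φ (F p') with hζdef
      have hFpB' : F p' ∈ B' := hB'F ▸ Set.mem_image_of_mem F hpB'
      have hζIoo : ζ ∈ Set.Ioo u2 v2 := hB'z _ hFpB'
      have hζν : ν ≤ ζ := csInf_le (hB'cpt.image hΦcont).bddBelow (Set.mem_image_of_mem Φ hFpB')
      have hPν : Pm ν = ((ζ - ν : ℝ) : AddCircle (1:ℝ)) := by
        rw [hPmdef]
        simp only
        rw [hetν, hπ₂O (F p') (hB'O hFpB'), ← hζdef]
        rw [sub_eq_iff_eq_add, ← AddCircle.coe_add, show ζ - ν + ν = ζ by ring]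
      have hζν' : ν < ζ := by
        rcases lt_or_eq_of_le hζν with h | h
        · exact h
        · exfalso
          apply hPne ν ⟨hμν.le, le_rfl⟩
          rw [hPν, ← h]
          simp
      have hcν : c ν = ζ - ν := by
        apply hrep ν _ _ hPν
        constructor
        · linarith
        · have h1 := hζIoo.2
          have h2 := hνIoo.1
          have h3 := hμIoo.1
          have h4 := hμIoo.2
          linarith
      have hRν : R ν = ζ := by
        rw [hRdef]
        simp only
        rw [hcν]
        ring
      have hwu : β2 + δ' < R μ := by
        rcases hδ' with ⟨h0, hv⟩ | ⟨h1, hβu⟩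
        · rw [h0, hRμ]; linarith [hξIoo.1]
        · rw [h1, hRμ]; linarith [hξIoo.1]
      have hwv : R ν < β1 + δ' := by
        rcases hδ' with ⟨h0, hv⟩ | ⟨h1, hβu⟩
        · rw [h0, hRν]; linarith [hζIoo.2]
        · rw [h1, hRν]; linarith [hζIoo.2]
      obtain ⟨σ1, σ2, hσ1μ, hσ12, hσ2ν, hwin⟩ :=
        stmt15_window hμν.le hRcont (by linarith : β1 + δ' ≤ β2 + δ') hwu hwv
      have hRRimg : (fun τ => R τ - δ') '' Set.Icc σ1 σ2 = Set.Icc β1 β2 := by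
        have h1 : (fun τ => R τ - δ') '' Set.Icc σ1 σ2
            = (fun yy => yy - δ') '' (R '' Set.Icc σ1 σ2) :=
          (Set.image_image (fun yy => yy - δ') R (Set.Icc σ1 σ2)).symm
        rw [h1, hwin]
        ext yy
        simp only [Set.mem_image, Set.mem_Icc]
        constructor
        · rintro ⟨zz, hzz, rfl⟩
          exact ⟨by linarith [hzz.1], by linarith [hzz.2]⟩
        · intro hyy
          exact ⟨yy + δ', ⟨by linarith [hyy.1], by linarith [hyy.2]⟩, by ring⟩
      refine ⟨σ1, σ2, fun τ => R τ - δ', hσ1μ, hσ12, hσ2ν,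
        (hRcont.mono (Set.Icc_subset_Icc hσ1μ hσ2ν)).sub continuousOn_const, hRRimg, ?_⟩
      intro τ hτ
      have hRτ : R τ ∈ Set.Icc (β1+δ') (β2+δ') := by
        rw [← hwin]
        exact Set.mem_image_of_mem R hτ
      have hRIoo : R τ - δ' ∈ Set.Ioo (0:ℝ) 1 := by
        have h1 := hRτ.1
        have h2 := hRτ.2
        constructor
        · linarith
        · linarith
      have hπτ : π₂ (F (et τ)) = ((R τ - δ' : ℝ) : AddCircle (1:ℝ)) := by
        rw [hπR τ]
        rcases hδ' with ⟨h0, _⟩ | ⟨h1, _⟩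
        · rw [h0, sub_zero]
        · rw [h1]
          conv_lhs => rw [show R τ = (R τ - 1) + 1 by ring]
          rw [AddCircle.coe_add_period]
      exact hfib _ _ hRIoo hπτ
    -- closing the covering loop between the two pairs
    set μ12 := sSup (Φ '' B1) with hμ12def
    set ν12 := sInf (Φ '' B2) with hν12def
    have hμ12Ioo : μ12 ∈ Set.Ioo (s + w/9) (s + 2*w/9) := by
      obtain ⟨z, hz, he⟩ := (hB1cpt.image hΦcont).sSup_mem (hB1ne.image Φ)
      rw [hμ12def, ← he]
      exact hB1z z hz
    have hν12Ioo : ν12 ∈ Set.Ioo (s + 3*w/9) (s + 4*w/9) := by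
      obtain ⟨z, hz, he⟩ := (hB2cpt.image hΦcont).sInf_mem (hB2ne.image Φ)
      rw [hν12def, ← he]
      exact hB2z z hz
    obtain ⟨σ'1, σ'2, RR', hA1, hA2, hA3, hR'cont, hR'img, hR'ev⟩ :=
      PAIR B3 B4 (s + 5*w/9) (s + 6*w/9) (s + 7*w/9) (s + 8*w/9) μ12 ν12 1
        hB3ne hB3cpt hFB3 hB3O hB3z hB4ne hB4cpt hFB4 hB4O hB4z
        (by linarith) (by linarith) (by rw [hwdef]; linarith)
        (by linarith [hμ12Ioo.1]) (by linarith [hμ12Ioo.2, hν12Ioo.1])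
        (by
          have h1 := hν12Ioo.2
          have h2 : s + 4*w/9 ≤ t := by rw [hwdef]; linarith
          linarith)
        (Or.inr ⟨rfl, by linarith [hν12Ioo.2]⟩)
    have hσ'1lb : s + 5*w/9 < σ'1 := by
      have h1 : sSup (Φ '' B3) ∈ Set.Ioo (s + 5*w/9) (s + 6*w/9) := by
        obtain ⟨z, hz, he⟩ := (hB3cpt.image hΦcont).sSup_mem (hB3ne.image Φ)
        rw [← he]
        exact hB3z z hz
      linarith [hA1, h1.1]
    have hσ'2ub : σ'2 < s + 8*w/9 := by
      have h1 : sInf (Φ '' B4) ∈ Set.Ioo (s + 7*w/9) (s + 8*w/9) := by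
        obtain ⟨z, hz, he⟩ := (hB4cpt.image hΦcont).sInf_mem (hB4ne.image Φ)
        rw [← he]
        exact hB4z z hz
      linarith [hA3, h1.2]
    obtain ⟨σ1, σ2, RR, hB1a, hB12, hB2b, hRcont, hRimg, hRev⟩ :=
      PAIR B1 B2 (s + w/9) (s + 2*w/9) (s + 3*w/9) (s + 4*w/9) σ'1 σ'2 0
        hB1ne hB1cpt hFB1 hB1O hB1z hB2ne hB2cpt hFB2 hB2O hB2z
        (by linarith) (by linarith) (by rw [hwdef]; linarith)
        (by linarith [hσ'1lb]) hA2
        (by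
          have h1 : s + 8*w/9 < 1 := by rw [hwdef]; linarith
          linarith [hσ'2ub])
        (Or.inl ⟨rfl, by linarith [hσ'1lb]⟩)
    have hmapsto : ∀ τ ∈ Set.Icc σ1 σ2, RR τ ∈ Set.Icc σ'1 σ'2 := by
      intro τ hτ
      rw [← hRimg]
      exact Set.mem_image_of_mem RR hτ
    have hhcont : ContinuousOn (fun τ => RR' (RR τ)) (Set.Icc σ1 σ2) :=
      hR'cont.comp hRcont hmapsto
    have hhimg : (fun τ => RR' (RR τ)) '' Set.Icc σ1 σ2 = Set.Icc μ12 ν12 := by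
      rw [← Set.image_image RR' RR, hRimg, hR'img]
    have hμ12ν12 : μ12 ≤ ν12 := le_trans hB1a (le_trans hB12 hB2b)
    obtain ⟨τa, hτamem, hτaval⟩ : ∃ τa ∈ Set.Icc σ1 σ2, RR' (RR τa) = μ12 := by
      have h1 : μ12 ∈ (fun τ => RR' (RR τ)) '' Set.Icc σ1 σ2 := by
        rw [hhimg]
        exact ⟨le_rfl, hμ12ν12⟩
      obtain ⟨τa, h2, h3⟩ := h1
      exact ⟨τa, h2, h3⟩
    obtain ⟨τb, hτbmem, hτbval⟩ : ∃ τb ∈ Set.Icc σ1 σ2, RR' (RR τb) = ν12 := by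
      have h1 : ν12 ∈ (fun τ => RR' (RR τ)) '' Set.Icc σ1 σ2 := by
        rw [hhimg]
        exact ⟨hμ12ν12, le_rfl⟩
      obtain ⟨τb, h2, h3⟩ := h1
      exact ⟨τb, h2, h3⟩
    obtain ⟨τst, hτstmem, hτsteq⟩ := stmt15_fix hhcont hτamem hτbmem
      (by show RR' (RR τa) ≤ τa; rw [hτaval]; exact le_trans hB1a hτamem.1)
      (by show τb ≤ RR' (RR τb); rw [hτbval]; exact le_trans hτbmem.2 hB2b)
    have he1 : F (et τst) = et (RR τst) := hRev τst hτstmem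
    have he2 : F (et (RR τst)) = et (RR' (RR τst)) := hR'ev (RR τst) (hmapsto τst hτstmem)
    have hper2 : f^[N + N] (et τst) = et τst := by
      rw [Function.iterate_add_apply]
      show F (F (et τst)) = et τst
      rw [he1, he2, show RR' (RR τst) = τst from hτsteq]
    apply hnoper τst ?_ (N + N) (by positivity) hper2
    constructor
    · have h1 := hμ12Ioo.1
      have h2 := hτstmem.1
      linarith [hB1a]
    · have h1 := hν12Ioo.2
      have h2 : s + 4*w/9 ≤ t := by rw [hwdef]; linarith
      have h3 := hτstmem.2
      linarith [hB2b]
  · -- Case I : two separate components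
    set Ca := connectedComponentIn Oᶜ a' with hCadef
    set Cb := connectedComponentIn Oᶜ b' with hCbdef
    have hCaclosed : IsClosed Ca := stmt15_cci_closed hOopen.isClosed_compl a'
    have hCbclosed : IsClosed Cb := stmt15_cci_closed hOopen.isClosed_compl b'
    have haCa : a' ∈ Ca := mem_connectedComponentIn haOc
    have hbCb : b' ∈ Cb := mem_connectedComponentIn hbOc
    have hdisj : ∀ z, z ∈ Ca → z ∈ Cb → False := by
      intro z hza hzb
      apply hcase
      rw [hCadef, connectedComponentIn_eq hza, ← connectedComponentIn_eq hzb]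
      exact hbCb
    have haCb : a' ∉ Cb := fun h => hdisj a' haCa h
    have hbCa : b' ∉ Ca := fun h => hdisj b' h hbCb
    have hCasub : Ca ⊆ Oᶜ := connectedComponentIn_subset _ _
    have hCbsub : Cb ⊆ Oᶜ := connectedComponentIn_subset _ _
    have hfrCb : ∀ z ∈ frontier Cb, z = b' := by
      intro z hz
      rw [frontier_eq_closure_inter_closure] at hz
      have hzCb : z ∈ Cb := hCbclosed.closure_eq ▸ hz.1
      have hcompl : (Cbᶜ : Set X) ⊆ O ∪ Ca := by
        intro ww hw
        by_cases hwO : ww ∈ O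
        · exact Or.inl hwO
        · rcases hbump ww hwO with h | h
          · exact Or.inr h
          · exact absurd h hw
      have hz2 : z ∈ closure O ∪ Ca := by
        have := closure_mono hcompl hz.2
        rwa [closure_union, hCaclosed.closure_eq] at this
      rcases hz2 with h | h
      · have hzO : z ∉ O := fun hO => (hCbsub hzCb) hO
        rcases hfrO ⟨h, hzO⟩ with h2 | h2
        · exact absurd (h2 ▸ hzCb) haCb
        · exact h2
      · exact absurd hzCb (fun hc => hdisj z h hc)
    have hfrCa : ∀ z ∈ frontier Ca, z = a' := by
      intro z hz
      rw [frontier_eq_closure_inter_closure] at hz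
      have hzCa : z ∈ Ca := hCaclosed.closure_eq ▸ hz.1
      have hcompl : (Caᶜ : Set X) ⊆ O ∪ Cb := by
        intro ww hw
        by_cases hwO : ww ∈ O
        · exact Or.inl hwO
        · rcases hbump ww hwO with h | h
          · exact absurd h hw
          · exact Or.inr h
      have hz2 : z ∈ closure O ∪ Cb := by
        have := closure_mono hcompl hz.2
        rwa [closure_union, hCbclosed.closure_eq] at this
      rcases hz2 with h | h
      · have hzO : z ∉ O := fun hO => (hCasub hzCa) hO
        rcases hfrO ⟨h, hzO⟩ with h2 | h2
        · exact h2
        · exact absurd (h2 ▸ hzCa) hbCa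
      · exact absurd hzCa (fun hc => hdisj z hc h)
    set π : X → ℝ := Ca.piecewise (fun _ => (0:ℝ)) (Cb.piecewise (fun _ => (1:ℝ)) Φ)
      with hπdef
    have hinner_cont : Continuous (Cb.piecewise (fun _ => (1:ℝ)) Φ) := by
      apply Continuous.piecewise _ continuous_const hΦcont
      intro z hz
      rw [hfrCb z hz]
      exact hΦb'.symm
    have hπcont : Continuous π := by
      rw [hπdef]
      apply Continuous.piecewise _ continuous_const hinner_cont
      intro z hz
      rw [hfrCa z hz, Set.piecewise_eq_of_notMem _ _ _ haCb, hΦa']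
    have hπO : ∀ z ∈ O, π z = Φ z := by
      intro z hz
      have h1 : z ∉ Ca := fun h => (hCasub h) hz
      have h2 : z ∉ Cb := fun h => (hCbsub h) hz
      rw [hπdef, Set.piecewise_eq_of_notMem _ _ _ h1, Set.piecewise_eq_of_notMem _ _ _ h2]
    have hfibI : ∀ (z : X) (τ : ℝ), τ ∈ Set.Ioo (0:ℝ) 1 → π z = τ → z = et τ := by
      intro z τ hτ hπz
      by_cases hzCa : z ∈ Ca
      · rw [hπdef, Set.piecewise_eq_of_mem _ _ _ hzCa] at hπz
        exfalso; rw [← hπz] at hτ; exact lt_irrefl _ hτ.1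
      by_cases hzCb : z ∈ Cb
      · rw [hπdef, Set.piecewise_eq_of_notMem _ _ _ hzCa,
          Set.piecewise_eq_of_mem _ _ _ hzCb] at hπz
        exfalso; rw [← hπz] at hτ; exact lt_irrefl _ hτ.2
      have hzO : z ∈ O := by
        by_contra hzO
        rcases hbump z hzO with h | h
        · exact hzCa h
        · exact hzCb h
      rw [hπO z hzO] at hπz
      rw [← hπz]
      exact (hetΦ z (hOsubA hzO)).symm
    set iB := sInf (Φ '' B1) with hiBdef
    have hiBmem : iB ∈ Φ '' B1 := (hB1cpt.image hΦcont).sInf_mem (hB1ne.image Φ)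
    obtain ⟨pmin, hpB, hpv⟩ := hiBmem
    have hiBIoo : iB ∈ Set.Ioo (s + w/9) (s + 2*w/9) := hpv ▸ hB1z pmin hpB
    obtain ⟨x0, hx0B, hx0⟩ : ∃ x0 ∈ B1, F x0 = pmin := by
      have h1 : pmin ∈ F '' B1 := hFB1.symm ▸ hpB
      obtain ⟨x0, hx0, he⟩ := h1
      exact ⟨x0, hx0, he⟩
    set τ2 := Φ x0 with hτ2def
    have hτ2Ioo : τ2 ∈ Set.Ioo (s + w/9) (s + 2*w/9) := hB1z x0 hx0B
    have h12 : iB ≤ τ2 := csInf_le (hB1cpt.image hΦcont).bddBelow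
      (Set.mem_image_of_mem Φ hx0B)
    set ρ := fun τ => π (F (et τ)) with hρdef
    have hρcont : Continuous ρ := hπcont.comp (hFcont.comp hetcont)
    have hρ1 : iB ≤ ρ iB := by
      have heti : et iB = pmin := by rw [← hpv]; exact hetΦ pmin (hOsubA (hB1O hpB))
      have hFin : F pmin ∈ B1 := hFB1 ▸ Set.mem_image_of_mem F hpB
      rw [hρdef]
      simp only
      rw [heti, hπO (F pmin) (hB1O hFin)]
      exact csInf_le (hB1cpt.image hΦcont).bddBelow (Set.mem_image_of_mem Φ hFin)
    have hρ2 : ρ τ2 ≤ τ2 := by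
      have hetx : et τ2 = x0 := hetΦ x0 (hOsubA (hB1O hx0B))
      rw [hρdef]
      simp only
      rw [hetx, hx0, hπO pmin (hB1O hpB), hpv]
      exact h12
    obtain ⟨τst, hτstmem, hτsteq⟩ := stmt15_fix (hρcont.continuousOn)
      (⟨h12, le_rfl⟩ : τ2 ∈ Set.Icc iB τ2) (⟨le_rfl, h12⟩ : iB ∈ Set.Icc iB τ2) hρ2 hρ1
    have hτstIoo : τst ∈ Set.Ioo (0:ℝ) 1 := by
      constructor
      · have := hτstmem.1
        have := hiBIoo.1
        linarith
      · have := hτstmem.2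
        have := hτ2Ioo.2
        have : τ2 < s + 2*w/9 := hτ2Ioo.2
        have hwt : s + 2*w/9 ≤ t := by rw [hwdef]; linarith
        linarith [hτstmem.2, ht1]
    have hfix : F (et τst) = et τst := hfibI _ τst hτstIoo hτsteq
    refine hnoper τst ⟨?_, ?_⟩ N hNpos hfix
    · have := hτstmem.1
      have := hiBIoo.1
      linarith
    · have := hτstmem.2
      have := hτ2Ioo.2
      have hwt : s + 2*w/9 ≤ t := by rw [hwdef]; linarith
      linarith
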